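/- arXiv:1812.05298 — 3 statements merged into one kernel-verified Lean document; each statement's English description precedes it below -/
import Mathlib

section
/- Let T > 0, b > 0, v ∈ ℝ, k ≥ 0, and let lo ≤ hi be reals with lo ≥ −v/T. Define u* = min(max(lo, (√(2 b k) − v)/T), hi). Then for every u with lo ≤ u ≤ hi, one has f(u*) ≤ f(u); that is, the clamped controller u* minimizes the estimated one-step physical regret over the feasible interval [lo, hi]. -/
/-- The clamped controller
`u* = min (max lo ((√(2bk) − v)/T)) hi` minimizes the estimated one-step
physical regret `f(u) = ((v + T u)²/(2b) − k)²` over the feasible interval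
`[lo, hi]`, provided `T > 0`, `b > 0`, `k ≥ 0`, `lo ≤ hi`, and `lo ≥ −v/T`. -/
theorem one_step_ahead_optimal_controller
    (T b v k lo hi : ℝ) (hT : 0 < T) (hb : 0 < b) (hk : 0 ≤ k)
    (hlohi : lo ≤ hi) (hlo : -v / T ≤ lo) :
    ∀ u : ℝ, lo ≤ u → u ≤ hi →
      ((v + T * (min (max lo ((Real.sqrt (2 * b * k) - v) / T)) hi)) ^ 2 / (2 * b) - k) ^ 2
        ≤ ((v + T * u) ^ 2 / (2 * b) - k) ^ 2 := by
  intro u hu1 hu2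
  set s := Real.sqrt (2 * b * k) with hs
  set t := (s - v) / T with ht
  have hs0 : 0 ≤ s := Real.sqrt_nonneg _
  have hsq : s ^ 2 = 2 * b * k := by
    rw [sq]; exact Real.mul_self_sqrt (by positivity)
  have hvt : v + T * t = s := by rw [ht]; field_simp <;> ring
  have hb2 : (0:ℝ) < 2 * b := by linarith
  have hgt : (v + T * t) ^ 2 / (2 * b) - k = 0 := by
    rw [hvt, hsq]; field_simp <;> ring
  have hvlo : 0 ≤ v + T * lo := by
    have : -v ≤ lo * T := (div_le_iff₀ hT).mp hlo
    nlinarith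
  -- monotonicity of g on points ≥ lo (or ≥ t)
  have mono : ∀ x y : ℝ, 0 ≤ v + T * x → x ≤ y →
      (v + T * x) ^ 2 / (2 * b) - k ≤ (v + T * y) ^ 2 / (2 * b) - k := by
    intro x y hx hxy
    have h1 : (v + T * x) ^ 2 ≤ (v + T * y) ^ 2 := by
      nlinarith [mul_le_mul_of_nonneg_left hxy hT.le]
    have h2 : (v + T * x) ^ 2 / (2 * b) ≤ (v + T * y) ^ 2 / (2 * b) := by gcongr
    linarith
  rcases le_total t lo with htlo | hlot
  · -- u* = lo
    have hmax : max lo t = lo := max_eq_left htlo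
    have hmin : min (max lo t) hi = lo := by rw [hmax]; exact min_eq_left hlohi
    rw [hmin]
    have hvt0 : 0 ≤ v + T * t := by rw [hvt]; exact hs0
    have h1 : 0 ≤ (v + T * lo) ^ 2 / (2 * b) - k := by
      have := mono t lo hvt0 htlo; linarith
    have h2 : (v + T * lo) ^ 2 / (2 * b) - k ≤ (v + T * u) ^ 2 / (2 * b) - k :=
      mono lo u hvlo hu1
    nlinarith
  · rcases le_total t hi with hthi | hhit
    · -- u* = t
      have hmin : min (max lo t) hi = t := by
        rw [max_eq_right hlot]; exact min_eq_left hthi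
      rw [hmin, hgt]
      simpa using sq_nonneg ((v + T * u) ^ 2 / (2 * b) - k)
    · -- u* = hi
      have hmin : min (max lo t) hi = hi := by
        rw [max_eq_right hlot]; exact min_eq_right hhit
      rw [hmin]
      have hvu : 0 ≤ v + T * u := by
        have : lo ≤ u := hu1
        nlinarith
      have h1 : (v + T * hi) ^ 2 / (2 * b) - k ≤ 0 := by
        have hvhi : 0 ≤ v + T * hi := by nlinarith
        have := mono hi t hvhi hhit; linarith
      have h2 : (v + T * u) ^ 2 / (2 * b) - k ≤ (v + T * hi) ^ 2 / (2 * b) - k :=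
        mono u hi hvu hu2
      nlinarith
end

section
/- Let T > 0, b > 0, and w ≥ 0. If (v, d) satisfies v ≥ 0, d + T w − T v ≥ 0, and g(v, d, w) = (v, d), then necessarily v = w and d = w²/(2 b); that is, (w, w²/(2 b)) is the unique equilibrium of the closed-loop dynamics in this domain. -/
/-- Uniqueness of the equilibrium: if `v ≥ 0`,
`d + Tw − Tv ≥ 0`, and `g(v, d, w) = (v, d)` where
`g(v, d, w) = (√(2b(d + Tw − Tv)), d + Tw − Tv)`, then `v = w` and
`d = w²/(2b)`; i.e. `(w, w²/(2b))` is the unique equilibrium in this domain. -/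
theorem equilibrium_unique (T b w v d : ℝ) (hT : 0 < T) (hb : 0 < b) (hw : 0 ≤ w)
    (hv : 0 ≤ v) (hdom : 0 ≤ d + T * w - T * v)
    (heq : ((Real.sqrt (2 * b * (d + T * w - T * v)), d + T * w - T * v) : ℝ × ℝ)
      = (v, d)) :
    v = w ∧ d = w ^ 2 / (2 * b) := by
  obtain ⟨h1, h2⟩ := Prod.mk.injEq .. ▸ heq
  have hvw : v = w := by nlinarith
  subst hvw
  refine ⟨rfl, ?_⟩
  have hd : d + T * v - T * v = d := by ring
  rw [hd] at h1
  have hd0 : 0 ≤ d := by linarith [hd ▸ hdom]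
  have := Real.sq_sqrt (by positivity : (0:ℝ) ≤ 2 * b * d)
  rw [h1] at this
  field_simp
  linarith
end

section
/- Let T > 0 and b > 0, and define L(v, d) = (v²/(2 b) − d)². Then: (i) L(v, d) ≥ 0 for all (v, d); (ii) L(w, w²/(2 b)) = 0 for every w; and (iii) for every (v, d) and every input w with d + T w − T v ≥ 0, one has L(g(v, d, w)) = 0, and hence L(g(v, d, w)) − L(v, d) = −(v²/(2 b) − d)² ≤ 0. Consequently L is a Lyapunov function and the equilibrium (w, w²/(2 b)) is stable in the sense of Lyapunov. -/
/-- `L(v, d) = (v²/(2b) − d)²` is a Lyapunov function for the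
closed-loop dynamics `g(v, d, w) = (√(2b(d + Tw − Tv)), d + Tw − Tv)`:
(i) `L ≥ 0` everywhere; (ii) `L` vanishes at every equilibrium
`(w, w²/(2b))`; (iii) for every state `(v, d)` and input `w` with
`d + Tw − Tv ≥ 0`, `L(g(v, d, w)) = 0`, hence
`L(g(v, d, w)) − L(v, d) = −(v²/(2b) − d)² ≤ 0` — so the equilibrium
`(w, w²/(2b))` is stable in the sense of Lyapunov. -/
theorem lyapunov_function (T b : ℝ) (hT : 0 < T) (hb : 0 < b) :
    (∀ v d : ℝ, 0 ≤ (v ^ 2 / (2 * b) - d) ^ 2) ∧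
    (∀ w : ℝ, ((w : ℝ) ^ 2 / (2 * b) - w ^ 2 / (2 * b)) ^ 2 = 0) ∧
    (∀ v d w : ℝ, 0 ≤ d + T * w - T * v →
      ((Real.sqrt (2 * b * (d + T * w - T * v))) ^ 2 / (2 * b)
          - (d + T * w - T * v)) ^ 2 = 0 ∧
      ((Real.sqrt (2 * b * (d + T * w - T * v))) ^ 2 / (2 * b)
          - (d + T * w - T * v)) ^ 2 - (v ^ 2 / (2 * b) - d) ^ 2
        = -(v ^ 2 / (2 * b) - d) ^ 2 ∧
      ((Real.sqrt (2 * b * (d + T * w - T * v))) ^ 2 / (2 * b)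
          - (d + T * w - T * v)) ^ 2 - (v ^ 2 / (2 * b) - d) ^ 2 ≤ 0) := by
  refine ⟨fun v d => sq_nonneg _, fun w => by ring, fun v d w h => ?_⟩
  have hs : Real.sqrt (2 * b * (d + T * w - T * v)) ^ 2 = 2 * b * (d + T * w - T * v) :=
    Real.sq_sqrt (by positivity)
  have h0 : ((Real.sqrt (2 * b * (d + T * w - T * v))) ^ 2 / (2 * b)
      - (d + T * w - T * v)) ^ 2 = 0 := by
    rw [hs]; field_simp; ring
  refine ⟨h0, by rw [h0]; ring, by rw [h0]; simpa using sq_nonneg (v ^ 2 / (2 * b) - d)⟩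
end
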